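/- Let A and B be nonempty finite sets with |A| ≤ |B| (the men and women of the whole population), let A_s ⊆ A and B_s ⊆ B (the men and women of a strip), let S_m ⊆ A_s with |S_m| = m and S_w ⊆ B_s with |S_w| = w, and set X = |A_s| − |B_s|. Let f be a uniformly random matching of A into B. Then the expected number of members of S_m ∪ S_w whose partner lies in the strip, namely E[|{a ∈ S_m : f(a) ∈ B_s}|] + E[|{b ∈ S_w : b ∈ f(A_s)}|], is at least ((m + w)²/2 − X²/2)/|B|, where |B| = max(|A|,|B|). -/

import Mathlib

open scoped Classical
open Finset

private lemma fiber_eq {α β : Type*} [Fintype α] [Fintype β] (a : α) (b b' : β) :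
    (univ.filter fun f : α ↪ β => f a = b).card =
    (univ.filter fun f : α ↪ β => f a = b').card := by
  apply Finset.card_bij (fun f _ => f.trans (Equiv.swap b b').toEmbedding)
  · intro f hf
    simp only [mem_filter, mem_univ, true_and] at hf ⊢
    simp [hf]
  · intro f hf g hg h
    ext x
    have := congrArg (fun e : α ↪ β => (Equiv.swap b b') (e x)) h
    simpa [Equiv.swap_apply_self] using this
  · intro g hg
    simp only [mem_filter, mem_univ, true_and] at hg
    refine ⟨g.trans (Equiv.swap b b').toEmbedding, ?_, ?_⟩
    · simp [hg, Equiv.swap_apply_right]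
    · ext x; simp [Equiv.swap_apply_self]

private lemma fiber_mul {α β : Type*} [Fintype α] [Fintype β] (a : α) (b : β) :
    (univ.filter fun f : α ↪ β => f a = b).card * Fintype.card β
      = Fintype.card (α ↪ β) := by
  have h : Fintype.card (α ↪ β)
      = ∑ b' : β, (univ.filter fun f : α ↪ β => f a = b').card := by
    rw [← Finset.card_univ (α := α ↪ β)]
    exact Finset.card_eq_sum_card_fiberwise (f := fun f : α ↪ β => f a)
      (t := (univ : Finset β)) (fun f _ => mem_univ _)
  rw [h, Finset.sum_congr rfl fun b' _ => fiber_eq a b' b, Finset.sum_const,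
    card_univ, smul_eq_mul, mul_comm]

/-- For nonempty finite populations `A` (men) and `B` (women) with `|A| ≤ |B|`, a strip
consisting of men `A_s` and women `B_s`, subsets `S_m ⊆ A_s` and `S_w ⊆ B_s` of sizes
`m` and `w`, and imbalance `X = |A_s| - |B_s|`: under a uniformly random matching
`f : A ↪ B`, the expected number of members of `S_m ∪ S_w` whose partner lies in the
strip is at least `((m + w)²/2 - X²/2)/|B|`. -/
theorem stmt9 {α β : Type*} [Fintype α] [Fintype β] [Nonempty α] [Nonempty β]
    (hcard : Fintype.card α ≤ Fintype.card β)
    (As : Finset α) (Bs : Finset β) (Sm : Finset α) (Sw : Finset β)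
    (hSm : Sm ⊆ As) (hSw : Sw ⊆ Bs) :
    (((Sm.card : ℝ) + (Sw.card : ℝ)) ^ 2 / 2 - ((As.card : ℝ) - (Bs.card : ℝ)) ^ 2 / 2) /
        (Fintype.card β : ℝ)
      ≤ ((∑ f : α ↪ β, ((Sm.filter (fun a => f a ∈ Bs)).card : ℝ)) /
            (Fintype.card (α ↪ β) : ℝ)
          + (∑ f : α ↪ β, ((Sw.filter (fun b => ∃ x ∈ As, f x = b)).card : ℝ)) /
            (Fintype.card (α ↪ β) : ℝ)) := by
  have hNne : Nonempty (α ↪ β) := Function.Embedding.nonempty_of_card_le hcard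
  set N : ℕ := Fintype.card (α ↪ β) with hN
  have hNpos : 0 < N := Fintype.card_pos
  have hBpos : 0 < Fintype.card β := Fintype.card_pos
  -- first sum
  have key1 : (∑ f : α ↪ β, (Sm.filter (fun a => f a ∈ Bs)).card) * Fintype.card β
      = Sm.card * Bs.card * N := by
    have step1 : (∑ f : α ↪ β, (Sm.filter (fun a => f a ∈ Bs)).card)
        = ∑ a ∈ Sm, ∑ b ∈ Bs, (univ.filter fun f : α ↪ β => f a = b).card := by
      have : ∀ f : α ↪ β, (Sm.filter (fun a => f a ∈ Bs)).card
          = ∑ a ∈ Sm, if f a ∈ Bs then 1 else 0 := fun f => Finset.card_filter _ _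
      rw [Finset.sum_congr rfl fun f _ => this f, Finset.sum_comm]
      refine Finset.sum_congr rfl fun a _ => ?_
      rw [← Finset.card_filter]
      exact Finset.card_eq_sum_card_fiberwise
        (f := fun f : α ↪ β => f a) (t := Bs)
        (fun f hf => by simpa using (mem_filter.mp hf).2) |>.trans
        (Finset.sum_congr rfl fun b hb => by
          congr 1
          ext f
          simp only [mem_filter, mem_univ, true_and]
          constructor
          · rintro ⟨_, h⟩; exact h
          · intro h; exact ⟨h ▸ hb, h⟩)
    rw [step1, Finset.sum_mul]
    rw [Finset.sum_congr rfl fun a _ => (Finset.sum_mul _ _ _)]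
    rw [Finset.sum_congr rfl fun a _ =>
      Finset.sum_congr rfl fun b _ => fiber_mul (α := α) (β := β) a b]
    simp only [Finset.sum_const, smul_eq_mul, ← hN]
    ring
  -- second sum
  have key2 : (∑ f : α ↪ β, (Sw.filter (fun b => ∃ x ∈ As, f x = b)).card) * Fintype.card β
      = Sw.card * As.card * N := by
    have step1 : (∑ f : α ↪ β, (Sw.filter (fun b => ∃ x ∈ As, f x = b)).card)
        = ∑ b ∈ Sw, ∑ a ∈ As, (univ.filter fun f : α ↪ β => f a = b).card := by
      have : ∀ f : α ↪ β, (Sw.filter (fun b => ∃ x ∈ As, f x = b)).card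
          = ∑ b ∈ Sw, if (∃ x ∈ As, f x = b) then 1 else 0 :=
        fun f => Finset.card_filter _ _
      rw [Finset.sum_congr rfl fun f _ => this f, Finset.sum_comm]
      refine Finset.sum_congr rfl fun b _ => ?_
      rw [← Finset.card_filter]
      have hbi : (univ.filter fun f : α ↪ β => ∃ x ∈ As, f x = b)
          = As.biUnion (fun a => univ.filter fun f : α ↪ β => f a = b) := by
        ext f
        simp only [mem_filter, mem_univ, true_and, mem_biUnion]
      rw [hbi]
      exact Finset.card_biUnion (fun x _ y _ hxy => by
        rw [Function.onFun, Finset.disjoint_left]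
        intro f hf hg
        simp only [mem_filter, mem_univ, true_and] at hf hg
        exact hxy (f.injective (hf.trans hg.symm)))
    rw [step1, Finset.sum_mul]
    rw [Finset.sum_congr rfl fun b _ => (Finset.sum_mul _ _ _)]
    rw [Finset.sum_congr rfl fun b _ =>
      Finset.sum_congr rfl fun a _ => fiber_mul (α := α) (β := β) a b]
    simp only [Finset.sum_const, smul_eq_mul, ← hN]
    ring
  -- cast to reals
  have hBR : (0:ℝ) < (Fintype.card β : ℝ) := by exact_mod_cast hBpos
  have hNR : (0:ℝ) < (N : ℝ) := by exact_mod_cast hNpos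
  have e1 : (∑ f : α ↪ β, ((Sm.filter (fun a => f a ∈ Bs)).card : ℝ)) / (N : ℝ)
      = (Sm.card : ℝ) * (Bs.card : ℝ) / (Fintype.card β : ℝ) := by
    have := congrArg (fun n : ℕ => (n : ℝ)) key1
    push_cast at this
    field_simp
    linarith [this]
  have e2 : (∑ f : α ↪ β, ((Sw.filter (fun b => ∃ x ∈ As, f x = b)).card : ℝ)) / (N : ℝ)
      = (Sw.card : ℝ) * (As.card : ℝ) / (Fintype.card β : ℝ) := by
    have := congrArg (fun n : ℕ => (n : ℝ)) key2
    push_cast at this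
    field_simp
    linarith [this]
  rw [hN] at e1 e2 ⊢
  rw [e1, e2, ← add_div, div_le_div_iff₀ hBR hBR]
  have hm : (Sm.card : ℝ) ≤ (As.card : ℝ) := by
    exact_mod_cast Finset.card_le_card hSm
  have hw : (Sw.card : ℝ) ≤ (Bs.card : ℝ) := by
    exact_mod_cast Finset.card_le_card hSw
  have hm0 : (0:ℝ) ≤ (Sm.card : ℝ) := Nat.cast_nonneg _
  have hw0 : (0:ℝ) ≤ (Sw.card : ℝ) := Nat.cast_nonneg _
  nlinarith [sq_nonneg ((As.card : ℝ) - (Sm.card : ℝ) - (Bs.card : ℝ) + (Sw.card : ℝ)),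
    mul_nonneg hm0 (sub_nonneg.mpr hm), mul_nonneg hw0 (sub_nonneg.mpr hw),
    mul_nonneg hm0 (sub_nonneg.mpr hw), mul_nonneg hw0 (sub_nonneg.mpr hm), hBR.le]
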